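/- arXiv:1012.3362 — 3 statements merged into one kernel-verified Lean document; each statement's English description precedes it below -/
import Mathlib

section
/- Let A be a Banach algebra with uniformly bounded automorphism group ψ_t (bound M), 0 < r < 1, and let |a|_r = sup_{t ≠ 0} |t|^{−r} ‖ψ_t(a) − a‖. If a ∈ A satisfies |a|_r < ∞ and a is invertible in A, then |a⁻¹|_r ≤ M‖a⁻¹‖² |a|_r < ∞. Hence the Hölder–Zygmund space Λ^∞_r(A) is inverse-closed in A. -/
open scoped ENNReal

/-- The Hölder–Zygmund seminorm `|a|_r = sup_{t ≠ 0} |t|^{-r} ‖ψ_t(a) - a‖`,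
valued in `ℝ≥0∞`. -/
noncomputable def hzSeminorm {A : Type*} [NormedRing A] [NormedAlgebra ℂ A] {d : ℕ}
    (ψ : (Fin d → ℝ) → (A ≃ₐ[ℂ] A)) (r : ℝ) (a : A) : ℝ≥0∞ :=
  ⨆ t : {t : Fin d → ℝ // t ≠ 0},
    ENNReal.ofReal (‖(t : Fin d → ℝ)‖ ^ (-r) * ‖ψ (t : Fin d → ℝ) a - a‖)

/-- If `a` has finite Hölder–Zygmund seminorm and is invertible in `A`, then
`|a⁻¹|_r ≤ M‖a⁻¹‖²|a|_r < ∞`; hence `Λ^∞_r(A)` is inverse-closed in `A`. -/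
theorem stmt_9 {A : Type*} [NormedRing A] [NormedAlgebra ℂ A] [CompleteSpace A]
    {d : ℕ} (ψ : (Fin d → ℝ) → (A ≃ₐ[ℂ] A))
    (hgrp : ∀ s t : Fin d → ℝ, ∀ a : A, ψ s (ψ t a) = ψ (s + t) a)
    (M : ℝ) (hM : ∀ (t : Fin d → ℝ) (a : A), ‖ψ t a‖ ≤ M * ‖a‖)
    (r : ℝ) (hr0 : 0 < r) (hr1 : r < 1)
    (u : Aˣ) (hu : hzSeminorm ψ r (↑u : A) < ⊤) :
    hzSeminorm ψ r (↑u⁻¹ : A) ≤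
        ENNReal.ofReal (M * ‖(↑u⁻¹ : A)‖ ^ 2) * hzSeminorm ψ r (↑u : A) ∧
      hzSeminorm ψ r (↑u⁻¹ : A) < ⊤ := by
  -- nonnegativity of the constant
  have hC : 0 ≤ M * ‖(↑u⁻¹ : A)‖ ^ 2 := by
    rcases eq_or_lt_of_le (norm_nonneg (↑u⁻¹ : A)) with h | h
    · rw [← h]; simp
    · have hMn : 0 ≤ M := by
        have h0 : (0 : ℝ) ≤ M * ‖(↑u⁻¹ : A)‖ :=
          le_trans (norm_nonneg _) (hM 0 (↑u⁻¹ : A))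
        nlinarith
      positivity
  -- key pointwise estimate
  have key : ∀ t : Fin d → ℝ,
      ‖ψ t (↑u⁻¹ : A) - (↑u⁻¹ : A)‖ ≤
        M * ‖(↑u⁻¹ : A)‖ ^ 2 * ‖ψ t (↑u : A) - (↑u : A)‖ := by
    intro t
    have h1 : ψ t (↑u⁻¹ : A) * ψ t (↑u : A) = 1 := by
      rw [← map_mul]
      simp
    have hid : ψ t (↑u⁻¹ : A) - (↑u⁻¹ : A) =
        ψ t (↑u⁻¹ : A) * ((↑u : A) - ψ t (↑u : A)) * (↑u⁻¹ : A) := by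
      have h2 : (↑u : A) * (↑u⁻¹ : A) = 1 := u.mul_inv
      calc ψ t (↑u⁻¹ : A) - (↑u⁻¹ : A)
          = ψ t (↑u⁻¹ : A) * ((↑u : A) * (↑u⁻¹ : A)) -
              (ψ t (↑u⁻¹ : A) * ψ t (↑u : A)) * (↑u⁻¹ : A) := by
            rw [h1, h2, mul_one, one_mul]
        _ = ψ t (↑u⁻¹ : A) * ((↑u : A) - ψ t (↑u : A)) * (↑u⁻¹ : A) := by
            noncomm_ring
    rw [hid]
    have hMnn : 0 ≤ M * ‖(↑u⁻¹ : A)‖ :=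
      le_trans (norm_nonneg _) (hM 0 (↑u⁻¹ : A))
    calc ‖ψ t (↑u⁻¹ : A) * ((↑u : A) - ψ t (↑u : A)) * (↑u⁻¹ : A)‖
        ≤ ‖ψ t (↑u⁻¹ : A)‖ * ‖(↑u : A) - ψ t (↑u : A)‖ * ‖(↑u⁻¹ : A)‖ :=
          le_trans (norm_mul_le _ _)
            (mul_le_mul_of_nonneg_right (norm_mul_le _ _) (norm_nonneg _))
      _ ≤ (M * ‖(↑u⁻¹ : A)‖) * ‖(↑u : A) - ψ t (↑u : A)‖ * ‖(↑u⁻¹ : A)‖ := by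
          gcongr
          exact hM t _
      _ = M * ‖(↑u⁻¹ : A)‖ ^ 2 * ‖ψ t (↑u : A) - (↑u : A)‖ := by
          rw [norm_sub_rev]; ring
  -- seminorm bound
  have hle : hzSeminorm ψ r (↑u⁻¹ : A) ≤
      ENNReal.ofReal (M * ‖(↑u⁻¹ : A)‖ ^ 2) * hzSeminorm ψ r (↑u : A) := by
    rw [hzSeminorm]
    refine iSup_le fun t => ?_
    have hpow : (0 : ℝ) ≤ ‖(t : Fin d → ℝ)‖ ^ (-r) := Real.rpow_nonneg (norm_nonneg _) _
    have hreal : ‖(t : Fin d → ℝ)‖ ^ (-r) * ‖ψ (t : Fin d → ℝ) (↑u⁻¹ : A) - (↑u⁻¹ : A)‖ ≤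
        M * ‖(↑u⁻¹ : A)‖ ^ 2 *
          (‖(t : Fin d → ℝ)‖ ^ (-r) * ‖ψ (t : Fin d → ℝ) (↑u : A) - (↑u : A)‖) := by
      have := mul_le_mul_of_nonneg_left (key (t : Fin d → ℝ)) hpow
      nlinarith [this]
    calc ENNReal.ofReal (‖(t : Fin d → ℝ)‖ ^ (-r) * ‖ψ (t : Fin d → ℝ) (↑u⁻¹ : A) - (↑u⁻¹ : A)‖)
        ≤ ENNReal.ofReal (M * ‖(↑u⁻¹ : A)‖ ^ 2 *
            (‖(t : Fin d → ℝ)‖ ^ (-r) * ‖ψ (t : Fin d → ℝ) (↑u : A) - (↑u : A)‖)) :=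
          ENNReal.ofReal_le_ofReal hreal
      _ = ENNReal.ofReal (M * ‖(↑u⁻¹ : A)‖ ^ 2) *
            ENNReal.ofReal
              (‖(t : Fin d → ℝ)‖ ^ (-r) * ‖ψ (t : Fin d → ℝ) (↑u : A) - (↑u : A)‖) :=
          ENNReal.ofReal_mul hC
      _ ≤ ENNReal.ofReal (M * ‖(↑u⁻¹ : A)‖ ^ 2) * hzSeminorm ψ r (↑u : A) := by
          refine mul_le_mul_right ?_ _
          rw [hzSeminorm]
          exact le_iSup (fun t : {t : Fin d → ℝ // t ≠ 0} =>
            ENNReal.ofReal (‖(t : Fin d → ℝ)‖ ^ (-r) * ‖ψ (t : Fin d → ℝ) (↑u : A) - (↑u : A)‖)) t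
  exact ⟨hle, lt_of_le_of_lt hle (ENNReal.mul_lt_top ENNReal.ofReal_lt_top hu)⟩
end

section
/- Let A be a Banach algebra with uniformly bounded automorphism group ψ (bound M), and ω^k_h(a) = sup_{|t| ≤ h} ‖(ψ_t − id)^k a‖ the k-th modulus of smoothness. Then ω^k_h(a) ≍ sup{‖Δ_{h_1}⋯Δ_{h_k} a‖ : |h_j| ≤ h, 1 ≤ j ≤ k}, with constants depending only on k and M. -/
/-- The difference operator `Δ_t = ψ_t - id` as an endomorphism of `A`. -/
noncomputable def diffOp {A : Type*} [NormedRing A] [NormedAlgebra ℂ A] {d : ℕ}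
    (ψ : (Fin d → ℝ) → (A ≃ₐ[ℂ] A)) (t : Fin d → ℝ) : Module.End ℂ A :=
  (ψ t).toLinearMap - LinearMap.id


open Finset MvPolynomial

set_option synthInstance.maxHeartbeats 1000000
set_option maxHeartbeats 2000000

noncomputable section

namespace Stmt11Aux

/-- alternating sum chestnut: `∑ i, (-1)^i C(c,i) i^e` vanishes for `e < c`. -/
def Dch (c e : ℕ) : ℂ := ∑ i ∈ range (c+1), (-1 : ℂ)^i * (Nat.choose c i : ℂ) * (i : ℂ)^e

theorem Dch_rec (c e : ℕ) :
    Dch (c+1) e = - ∑ m ∈ range e, (Nat.choose e m : ℂ) • Dch c m := by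
  have hbin : ∀ j : ℕ, ((j : ℂ) + 1)^e = ∑ m ∈ range (e+1), (j : ℂ)^m * (Nat.choose e m : ℂ) := by
    intro j
    simpa using add_pow (j : ℂ) 1 e
  have h1 : Dch (c+1) e
      = (∑ j ∈ range (c+1), (-1 : ℂ)^(j+1) * ((Nat.choose c j : ℂ) + (Nat.choose c (j+1) : ℂ))
          * ((j:ℂ)+1)^e) + (0:ℂ)^e := by
    rw [Dch, Finset.sum_range_succ']
    congr 1
    · apply Finset.sum_congr rfl
      intro j hj
      rw [Nat.choose_succ_succ]
      push_cast
      ring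
    · simp
  have h3 : ∑ j ∈ range (c+1), (-1 : ℂ)^(j+1) * (Nat.choose c (j+1) : ℂ) * ((j:ℂ)+1)^e
      = Dch c e - (0:ℂ)^e := by
    have : ∑ j ∈ range (c+1), (-1 : ℂ)^(j+1) * (Nat.choose c (j+1) : ℂ) * ((j:ℂ)+1)^e
        = ∑ i ∈ range (c+2), (-1 : ℂ)^i * (Nat.choose c i : ℂ) * (i:ℂ)^e
          - (-1 : ℂ)^0 * (Nat.choose c 0 : ℂ) * ((0:ℕ):ℂ)^e := by
      rw [Finset.sum_range_succ' (fun i => (-1 : ℂ)^i * (Nat.choose c i : ℂ) * (i:ℂ)^e) (c+1)]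
      push_cast
      ring
    rw [this, Finset.sum_range_succ]
    simp [Dch]
  have h2 : ∑ j ∈ range (c+1), (-1 : ℂ)^(j+1) * (Nat.choose c j : ℂ) * ((j:ℂ)+1)^e
      = - ∑ m ∈ range (e+1), (Nat.choose e m : ℂ) * Dch c m := by
    have : ∀ j ∈ range (c+1), (-1 : ℂ)^(j+1) * (Nat.choose c j : ℂ) * ((j:ℂ)+1)^e
        = - ∑ m ∈ range (e+1), (Nat.choose e m : ℂ) * ((-1 : ℂ)^j * (Nat.choose c j : ℂ) * (j:ℂ)^m) := by
      intro j hj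
      rw [hbin j, Finset.mul_sum, ← Finset.sum_neg_distrib]
      apply Finset.sum_congr rfl
      intro m hm
      ring
    rw [Finset.sum_congr rfl this]
    simp only [Finset.sum_neg_distrib]
    congr 1
    rw [Finset.sum_comm]
    apply Finset.sum_congr rfl
    intro m hm
    rw [Dch, Finset.mul_sum]
  have hsplit : ∀ j ∈ range (c+1), (-1 : ℂ)^(j+1) * ((Nat.choose c j : ℂ) + (Nat.choose c (j+1) : ℂ)) * ((j:ℂ)+1)^e
      = (-1 : ℂ)^(j+1) * (Nat.choose c j : ℂ) * ((j:ℂ)+1)^e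
        + (-1 : ℂ)^(j+1) * (Nat.choose c (j+1) : ℂ) * ((j:ℂ)+1)^e := by
    intro j hj; ring
  rw [h1, Finset.sum_congr rfl hsplit, Finset.sum_add_distrib, h2, h3]
  rw [Finset.sum_range_succ]
  simp only [Nat.choose_self, Nat.cast_one, one_smul, smul_eq_mul]
  push_cast
  ring

theorem Dch_lt (c : ℕ) : ∀ e, e < c → Dch c e = 0 := by
  induction c with
  | zero => intro e he; omega
  | succ c ih =>
    intro e he
    rw [Dch_rec]
    have : ∀ m ∈ range e, (Nat.choose e m : ℂ) • Dch c m = 0 := by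
      intro m hm
      rw [ih m (by simp at hm; omega)]
      simp
    rw [Finset.sum_eq_zero this]; simp

theorem Dch_self (c : ℕ) : Dch c c = (-1 : ℂ)^c * (Nat.factorial c : ℂ) := by
  induction c with
  | zero => simp [Dch]
  | succ c ih =>
    rw [Dch_rec]
    rw [Finset.sum_eq_single_of_mem c (by simp)]
    · rw [ih]
      simp only [smul_eq_mul]
      push_cast [Nat.choose_succ_self_right, Nat.factorial_succ]
      ring
    · intro m hm hne
      rw [Dch_lt c m (by simp at hm; omega)]; simp


variable {k : ℕ}

/-- every monomial of `p` has total degree at least `m` -/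
def Hi (m : ℕ) (p : MvPolynomial (Fin k) ℂ) : Prop :=
  ∀ c ∈ p.support, m ≤ ∑ j, c j

theorem Hi_zero (m : ℕ) : Hi m (0 : MvPolynomial (Fin k) ℂ) := by
  intro c hc; simp at hc

theorem Hi_mono {m m' : ℕ} {p : MvPolynomial (Fin k) ℂ} (h : m' ≤ m) (hp : Hi m p) :
    Hi m' p := fun c hc => le_trans h (hp c hc)

theorem Hi_add {m : ℕ} {p q : MvPolynomial (Fin k) ℂ} (hp : Hi m p) (hq : Hi m q) :
    Hi m (p + q) := by
  intro c hc
  rcases Finset.mem_union.1 (MvPolynomial.support_add hc) with h | h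
  · exact hp c h
  · exact hq c h

theorem Hi_neg {m : ℕ} {p : MvPolynomial (Fin k) ℂ} (hp : Hi m p) : Hi m (-p) := by
  intro c hc
  rw [MvPolynomial.support_neg] at hc
  exact hp c hc

theorem Hi_sub {m : ℕ} {p q : MvPolynomial (Fin k) ℂ} (hp : Hi m p) (hq : Hi m q) :
    Hi m (p - q) := by
  rw [sub_eq_add_neg]; exact Hi_add hp (Hi_neg hq)

theorem Hi_smul {m : ℕ} {p : MvPolynomial (Fin k) ℂ} (r : ℂ) (hp : Hi m p) : Hi m (r • p) := by
  intro c hc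
  exact hp c (Finsupp.support_smul hc)

theorem Hi_sum {m : ℕ} {α : Type*} (s : Finset α) (f : α → MvPolynomial (Fin k) ℂ)
    (hf : ∀ i ∈ s, Hi m (f i)) : Hi m (∑ i ∈ s, f i) := by
  classical
  induction s using Finset.induction_on with
  | empty => simpa using Hi_zero m
  | insert _ _ hns ih =>
    rename_i a s
    rw [Finset.sum_insert hns]
    exact Hi_add (hf a (Finset.mem_insert_self a s))
      (ih fun i hi => hf i (Finset.mem_insert_of_mem hi))

theorem Hi_mul {m n : ℕ} {p q : MvPolynomial (Fin k) ℂ} (hp : Hi m p) (hq : Hi n q) :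
    Hi (m + n) (p * q) := by
  classical
  intro c hc
  have := MvPolynomial.support_mul p q hc
  rw [Finset.mem_add] at this
  obtain ⟨a, ha, b, hb, rfl⟩ := this
  have : ∑ j, (a + b) j = (∑ j, a j) + (∑ j, b j) := by
    simp [Finsupp.add_apply, Finset.sum_add_distrib]
  rw [this]
  exact add_le_add (hp a ha) (hq b hb)

theorem Hi_pow {m : ℕ} {p : MvPolynomial (Fin k) ℂ} (hp : Hi m p) (n : ℕ) :
    Hi (n * m) (p ^ n) := by
  induction n with
  | zero => exact fun c _ => by simpa using Nat.zero_le _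
  | succ n ih =>
    rw [pow_succ, Nat.succ_mul]
    exact Hi_mul ih hp

theorem Hi_X (j : Fin k) : Hi 1 (X j : MvPolynomial (Fin k) ℂ) := by
  intro c hc
  rw [MvPolynomial.support_X] at hc
  simp at hc
  subst hc
  simp

theorem Hi_natCast (m : ℕ) : Hi 0 ((m : ℂ) • (1 : MvPolynomial (Fin k) ℂ)) := fun c _ => Nat.zero_le _


theorem Hi_any (p : MvPolynomial (Fin k) ℂ) : Hi 0 p := fun _ _ => Nat.zero_le _

/-- `x^γ = ∏ (X j + 1)^(γ j)` -/
def xp (γ : Fin k → ℕ) : MvPolynomial (Fin k) ℂ := ∏ j, (X j + 1) ^ γ j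

/-- linear part -/
def lin (γ : Fin k → ℕ) : MvPolynomial (Fin k) ℂ := ∑ j, C (γ j : ℂ) * X j

theorem Hi_lin (γ : Fin k → ℕ) : Hi 1 (lin γ) := by
  apply Hi_sum
  intro j _
  simpa using Hi_mul (Hi_any (C (γ j : ℂ))) (Hi_X j)

theorem Hi2_onevar (j : Fin k) (n : ℕ) :
    Hi 2 ((X j + 1) ^ n - 1 - C (n : ℂ) * X j) := by
  induction n with
  | zero =>
    have : ((X j + 1) ^ 0 - 1 - C ((0:ℕ) : ℂ) * X j : MvPolynomial (Fin k) ℂ) = 0 := by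
      simp
    rw [this]; exact Hi_zero 2
  | succ n ih =>
    have key : ((X j + 1) ^ (n+1) - 1 - C ((n+1 : ℕ) : ℂ) * X j : MvPolynomial (Fin k) ℂ)
        = C (n : ℂ) * (X j * X j)
          + ((X j + 1) ^ n - 1 - C (n : ℂ) * X j)
          + ((X j + 1) ^ n - 1 - C (n : ℂ) * X j) * X j := by
      have hc : (C ((n+1 : ℕ) : ℂ) : MvPolynomial (Fin k) ℂ) = C (n : ℂ) + 1 := by
        push_cast
        rw [map_add, map_one]
      rw [hc, pow_succ]
      ring
    rw [key]
    refine Hi_add (Hi_add ?_ ih) (Hi_mono (by omega) (Hi_mul ih (Hi_X j)))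
    simpa using Hi_mul (Hi_any (C (n : ℂ))) (Hi_mul (Hi_X j) (Hi_X j))

theorem Hi2_xp_gen (γ : Fin k → ℕ) (s : Finset (Fin k)) :
    Hi 2 ((∏ j ∈ s, (X j + 1) ^ γ j) - 1 - ∑ j ∈ s, C (γ j : ℂ) * X j) := by
  classical
  induction s using Finset.induction_on with
  | empty =>
    have : ((∏ j ∈ (∅ : Finset (Fin k)), (X j + 1) ^ γ j) - 1
        - ∑ j ∈ (∅ : Finset (Fin k)), C (γ j : ℂ) * X j : MvPolynomial (Fin k) ℂ) = 0 := by simp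
    rw [this]; exact Hi_zero 2
  | insert _ _ hns ih =>
    rename_i a s
    rw [Finset.prod_insert hns, Finset.sum_insert hns]
    set A := (X a + 1) ^ γ a - 1 - C (γ a : ℂ) * X a with hA
    set B := (∏ j ∈ s, (X j + 1) ^ γ j) - 1 - ∑ j ∈ s, C (γ j : ℂ) * X j with hB
    set u := (C (γ a : ℂ) * X a : MvPolynomial (Fin k) ℂ) with hu
    set v := (∑ j ∈ s, C (γ j : ℂ) * X j : MvPolynomial (Fin k) ℂ) with hv
    have key : (X a + 1) ^ γ a * (∏ j ∈ s, (X j + 1) ^ γ j) - 1 - (u + v)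
        = A * B + A + A * v + B + u * B + u * v := by
      have h1 : (X a + 1) ^ γ a = A + 1 + u := by rw [hA]; ring
      have h2 : (∏ j ∈ s, (X j + 1) ^ γ j) = B + 1 + v := by rw [hB]; ring
      rw [h1, h2]; ring
    rw [key]
    have hAd : Hi 2 A := Hi2_onevar a (γ a)
    have hBd : Hi 2 B := ih
    have hud : Hi 1 u := by rw [hu]; simpa using Hi_mul (Hi_any (C (γ a : ℂ))) (Hi_X a)
    have hvd : Hi 1 v := by
      apply Hi_sum; intro j _; simpa using Hi_mul (Hi_any (C (γ j : ℂ))) (Hi_X j)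
    refine Hi_add (Hi_add (Hi_add (Hi_add (Hi_add ?_ ?_) ?_) ?_) ?_) ?_
    · exact Hi_mono (by omega) (Hi_mul hAd hBd)
    · exact hAd
    · exact Hi_mono (by omega) (Hi_mul hAd hvd)
    · exact hBd
    · exact Hi_mono (by omega) (Hi_mul hud hBd)
    · exact Hi_mul hud hvd

theorem Hi2_xp (γ : Fin k → ℕ) : Hi 2 (xp γ - 1 - lin γ) := Hi2_xp_gen γ Finset.univ

theorem Hi_corr (γ : Fin k → ℕ) (d : ℕ) :
    Hi (d + 1) ((xp γ - 1) ^ d - (lin γ) ^ d) := by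
  set L := lin γ with hL
  set E := xp γ - 1 - L with hE
  have hxp : xp γ - 1 = L + E := by rw [hE]; ring
  rw [hxp, add_pow]
  rw [Finset.sum_range_succ]
  have htop : L ^ d * E ^ (d - d) * (Nat.choose d d : MvPolynomial (Fin k) ℂ) = L ^ d := by
    simp
  rw [htop, add_sub_cancel_right]
  apply Hi_sum
  intro i hi
  rw [Finset.mem_range] at hi
  have h1 : Hi (i * 1) (L ^ i) := Hi_pow (Hi_lin γ) i
  have h2 : Hi ((d - i) * 2) (E ^ (d - i)) := Hi_pow (Hi2_xp γ) (d - i)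
  have h3 := Hi_mul (Hi_mul h1 h2) (Hi_any ((Nat.choose d i : MvPolynomial (Fin k) ℂ)))
  exact Hi_mono (by omega) h3


theorem vandermonde (c : Fin k → ℕ) (d : ℕ) (hd : ∑ j, c j = d) :
    ∑ β ∈ Fintype.piFinset (fun j => Finset.range (c j + 1)),
      (∏ j, ((-1:ℂ)^(β j) * (Nat.choose (c j) (β j) : ℂ))) • (lin β)^d
    = ((Nat.multinomial Finset.univ c : ℂ) * ∏ j, ((-1:ℂ)^(c j) * (Nat.factorial (c j) : ℂ)))
        • ∏ j, (X j : MvPolynomial (Fin k) ℂ) ^ c j := by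
  classical
  have hterm : ∀ β : Fin k → ℕ, (lin β)^d
      = ∑ m ∈ Finset.piAntidiag Finset.univ d,
          C ((Nat.multinomial Finset.univ m : ℂ) * ∏ j, (β j : ℂ)^(m j))
            * ∏ j, (X j : MvPolynomial (Fin k) ℂ) ^ m j := by
    intro β
    rw [lin, Finset.sum_pow_eq_sum_piAntidiag]
    apply Finset.sum_congr rfl
    intro m hm
    have h1 : ∏ j, (C (β j : ℂ) * X j) ^ m j
        = C (∏ j, (β j : ℂ)^(m j)) * ∏ j, (X j : MvPolynomial (Fin k) ℂ) ^ m j := by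
      rw [map_prod, ← Finset.prod_mul_distrib]
      apply Finset.prod_congr rfl
      intro j _
      rw [mul_pow, map_pow]
    have hcast : ((Nat.multinomial Finset.univ m : ℕ) : MvPolynomial (Fin k) ℂ)
        = C ((Nat.multinomial Finset.univ m : ℕ) : ℂ) := by simp
    rw [h1, map_mul, hcast]
    ring
  have hLHS : ∑ β ∈ Fintype.piFinset (fun j => Finset.range (c j + 1)),
      (∏ j, ((-1:ℂ)^(β j) * (Nat.choose (c j) (β j) : ℂ))) • (lin β)^d
      = ∑ m ∈ Finset.piAntidiag Finset.univ d,
          C ((Nat.multinomial Finset.univ m : ℂ) * ∏ j, Dch (c j) (m j))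
            * ∏ j, (X j : MvPolynomial (Fin k) ℂ) ^ m j := by
    have step1 : ∀ β ∈ Fintype.piFinset (fun j => Finset.range (c j + 1)),
        (∏ j, ((-1:ℂ)^(β j) * (Nat.choose (c j) (β j) : ℂ))) • (lin β)^d
        = ∑ m ∈ Finset.piAntidiag Finset.univ d,
            C ((Nat.multinomial Finset.univ m : ℂ)
                * ∏ j, ((-1:ℂ)^(β j) * (Nat.choose (c j) (β j) : ℂ) * (β j : ℂ)^(m j)))
              * ∏ j, (X j : MvPolynomial (Fin k) ℂ) ^ m j := by
      intro β _
      rw [smul_eq_C_mul, hterm β, Finset.mul_sum]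
      apply Finset.sum_congr rfl
      intro m hm
      rw [← mul_assoc, ← map_mul]
      congr 2
      simp only [Finset.prod_mul_distrib]
      ring
    rw [Finset.sum_congr rfl step1, Finset.sum_comm]
    apply Finset.sum_congr rfl
    intro m hm
    rw [← Finset.sum_mul, ← map_sum, ← Finset.mul_sum]
    have hD : ∏ j, Dch (c j) (m j)
        = ∑ β ∈ Fintype.piFinset (fun j => Finset.range (c j + 1)),
            ∏ j, ((-1:ℂ)^(β j) * (Nat.choose (c j) (β j) : ℂ) * (β j : ℂ)^(m j)) := by
      simp only [Dch]
      rw [Finset.prod_univ_sum]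
    rw [hD]
  rw [hLHS]
  rw [Finset.sum_eq_single_of_mem c (by rw [Finset.mem_piAntidiag]; exact ⟨hd, fun _ _ => Finset.mem_univ _⟩)]
  · rw [smul_eq_C_mul]
    have hD : ∏ j, Dch (c j) (c j) = ∏ j, ((-1:ℂ)^(c j) * (Nat.factorial (c j):ℂ)) :=
      Finset.prod_congr rfl (fun j _ => Dch_self (c j))
    rw [hD]
  · intro m hm hne
    have hms : ∑ j, m j = d := by
      rw [Finset.mem_piAntidiag] at hm
      exact hm.1
    have : ∃ j, m j < c j := by
      by_contra hcon
      push_neg at hcon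
      have heq : ∀ j ∈ Finset.univ, c j = m j := by
        rw [← Finset.sum_eq_sum_iff_of_le (fun j _ => hcon j)]
        rw [hms, hd]
      exact hne (funext fun j => (heq j (Finset.mem_univ j)).symm)
    obtain ⟨j, hj⟩ := this
    rw [Finset.prod_eq_zero (Finset.mem_univ j) (Dch_lt (c j) (m j) hj)]
    simp


def NN (k : ℕ) : ℕ := k * (k - 1) + 1

def genSet (k : ℕ) : Set (MvPolynomial (Fin k) ℂ) :=
  {p | ∃ γ : Fin k → ℕ, (∑ j, γ j) ≤ NN k ∧ p = (xp γ - 1)^k}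

def Ik (k : ℕ) : Ideal (MvPolynomial (Fin k) ℂ) := Ideal.span (genSet k)

theorem Xj_pow_mem (j : Fin k) : (X j : MvPolynomial (Fin k) ℂ)^k ∈ Ik k := by
  have hxp : xp (Pi.single j 1) - 1 = (X j : MvPolynomial (Fin k) ℂ) := by
    rw [xp]
    rw [Finset.prod_eq_single j]
    · simp
    · intro i _ hne
      rw [Pi.single_eq_of_ne hne]
      simp
    · simp
  have : (X j : MvPolynomial (Fin k) ℂ)^k = (xp (Pi.single j 1) - 1)^k := by rw [hxp]
  rw [this]
  apply Ideal.subset_span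
  refine ⟨Pi.single j 1, ?_, rfl⟩
  have : ∑ i, Pi.single j 1 i = 1 := by
    rw [Finset.sum_eq_single j]
    · simp
    · intro i _ hne; rw [Pi.single_eq_of_ne hne]
    · simp
  rw [this, NN]
  omega

theorem base_mem (c : Fin k → ℕ) (h : NN k ≤ ∑ j, c j) :
    (∏ j, (X j : MvPolynomial (Fin k) ℂ) ^ c j) ∈ Ik k := by
  have hex : ∃ j, k ≤ c j := by
    by_contra hcon
    push_neg at hcon
    have : ∑ j, c j ≤ Finset.univ.card • (k - 1) :=
      Finset.sum_le_card_nsmul Finset.univ c (k-1) (fun j _ => by have := hcon j; omega)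
    simp [Finset.card_univ] at this
    rw [NN] at h
    omega
  obtain ⟨j, hj⟩ := hex
  have hsplit : ∏ i, (X i : MvPolynomial (Fin k) ℂ) ^ c i
      = (X j)^k * ((X j)^(c j - k) * ∏ i ∈ Finset.univ.erase j, (X i)^ c i) := by
    rw [← Finset.mul_prod_erase Finset.univ _ (Finset.mem_univ j), ← mul_assoc, ← pow_add]
    congr 2
    omega
  rw [hsplit]
  exact Ideal.mul_mem_right _ _ (Xj_pow_mem j)

theorem gen_pow_mem (β : Fin k → ℕ) (hβ : ∑ j, β j ≤ NN k) (d : ℕ) (hd : k ≤ d) :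
    (xp β - 1)^d ∈ Ik k := by
  have : (xp β - 1)^d = (xp β - 1)^k * (xp β - 1)^(d - k) := by
    rw [← pow_add]
    congr 1
    omega
  rw [this]
  exact Ideal.mul_mem_right _ _ (Ideal.subset_span ⟨β, hβ, rfl⟩)

theorem mono_mem : ∀ (t : ℕ) (c : Fin k → ℕ), k ≤ ∑ j, c j → NN k ≤ (∑ j, c j) + t →
    (∏ j, (X j : MvPolynomial (Fin k) ℂ) ^ c j) ∈ Ik k := by
  intro t
  induction t with
  | zero => exact fun c _ hc2 => base_mem c (by simpa using hc2)
  | succ t ih =>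
    intro c hkc hNc
    rcases le_or_gt (NN k) (∑ j, c j) with hbig | hsmall
    · exact base_mem c hbig
    · set d := ∑ j, c j with hd
      -- any Hi (d+1) polynomial is in the ideal, by the inductive hypothesis
      have hHi_mem : ∀ p : MvPolynomial (Fin k) ℂ, Hi (d+1) p → p ∈ Ik k := by
        intro p hp
        rw [MvPolynomial.as_sum p]
        apply Ideal.sum_mem
        intro v hv
        have hdeg : d + 1 ≤ ∑ j, v j := hp v hv
        have hmono : monomial v (MvPolynomial.coeff v p)
            = C (MvPolynomial.coeff v p) * ∏ i, (X i : MvPolynomial (Fin k) ℂ) ^ v i := by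
          rw [monomial_eq]
          congr 1
          exact Finsupp.prod_pow v _
        rw [hmono]
        exact Ideal.mul_mem_left _ _ (ih (⇑v) (by omega) (by omega))
      set K : ℂ := (Nat.multinomial Finset.univ c : ℂ)
        * ∏ j, ((-1:ℂ)^(c j) * (Nat.factorial (c j) : ℂ)) with hK
      have hKne : K ≠ 0 := by
        apply mul_ne_zero
        · exact (Nat.cast_ne_zero (R := ℂ)).mpr (Nat.multinomial_pos _ _).ne'
        · apply Finset.prod_ne_zero_iff.mpr
          intro j _
          apply mul_ne_zero
          · exact pow_ne_zero _ (by norm_num)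
          · exact_mod_cast (Nat.cast_ne_zero (R := ℂ)).mpr (Nat.factorial_ne_zero (c j))
      have hKmem : K • (∏ j, (X j : MvPolynomial (Fin k) ℂ) ^ c j) ∈ Ik k := by
        rw [← vandermonde c d hd.symm]
        apply Ideal.sum_mem
        intro β hβ
        have hβle : ∑ j, β j ≤ NN k := by
          have : ∀ j, β j ≤ c j := by
            intro j
            have := Fintype.mem_piFinset.mp hβ j
            rw [Finset.mem_range] at this
            omega
          calc ∑ j, β j ≤ ∑ j, c j := Finset.sum_le_sum (fun j _ => this j)
          _ ≤ NN k := le_of_lt hsmall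
        have hsplit : (lin β)^d = (xp β - 1)^d - ((xp β - 1)^d - (lin β)^d) := by ring
        rw [hsplit, smul_sub]
        apply Submodule.sub_mem
        · rw [smul_eq_C_mul]
          exact Ideal.mul_mem_left _ _ (gen_pow_mem β hβle d hkc)
        · exact hHi_mem _ (Hi_smul _ (Hi_corr β d))
      have hfin : (∏ j, (X j : MvPolynomial (Fin k) ℂ) ^ c j)
          = K⁻¹ • (K • (∏ j, (X j : MvPolynomial (Fin k) ℂ) ^ c j)) := by
        rw [smul_smul, inv_mul_cancel₀ hKne, one_smul]
      rw [hfin, smul_eq_C_mul]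
      exact Ideal.mul_mem_left _ _ hKmem

theorem prod_X_mem (hk : 1 ≤ k) : (∏ j, (X j : MvPolynomial (Fin k) ℂ)) ∈ Ik k := by
  have h1 : ∑ j : Fin k, (fun _ => (1:ℕ)) j = k := by simp
  have := mono_mem (NN k) (fun _ => 1) (by rw [h1]) (by rw [h1]; omega)
  simpa using this


/-! ### Transport to endomorphisms -/

section Transport

variable {A : Type*} [NormedRing A] [NormedAlgebra ℂ A]
variable {d : ℕ} (ψ : (Fin d → ℝ) → (A ≃ₐ[ℂ] A))

/-- `ψ t` as an endomorphism. -/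
def opE (t : Fin d → ℝ) : Module.End ℂ A := (ψ t).toLinearMap

theorem opE_mul (hgrp : ∀ s t : Fin d → ℝ, ∀ a : A, ψ s (ψ t a) = ψ (s + t) a) (u v : Fin d → ℝ) : opE ψ u * opE ψ v = opE ψ (u + v) :=
  LinearMap.ext fun a => hgrp u v a

theorem opE_zero (hgrp : ∀ s t : Fin d → ℝ, ∀ a : A, ψ s (ψ t a) = ψ (s + t) a) : opE ψ 0 = 1 := by
  apply LinearMap.ext
  intro a
  have h := hgrp 0 0 a
  rw [add_zero] at h
  have := (ψ 0).injective h
  simpa [opE, Module.End.one_apply] using this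

theorem opE_comm (hgrp : ∀ s t : Fin d → ℝ, ∀ a : A, ψ s (ψ t a) = ψ (s + t) a) (u v : Fin d → ℝ) : opE ψ u * opE ψ v = opE ψ v * opE ψ u := by
  rw [opE_mul ψ hgrp, opE_mul ψ hgrp, add_comm]

/-- the commutative subalgebra generated by the `ψ t`. -/
def TA : Subalgebra ℂ (Module.End ℂ A) := Algebra.adjoin ℂ (Set.range (opE ψ))

/-- `TA` is commutative. -/
abbrev TAcomm (hgrp : ∀ s t : Fin d → ℝ, ∀ a : A, ψ s (ψ t a) = ψ (s + t) a) : CommRing (TA ψ) :=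
  { (TA ψ).toRing with mul_comm := (Algebra.adjoinCommRingOfComm ℂ (by
    rintro x ⟨u, rfl⟩ y ⟨v, rfl⟩
    exact opE_comm ψ hgrp u v)).mul_comm }

/-- `ψ t` as an element of `TA`. -/
def oT (v : Fin d → ℝ) : TA ψ := ⟨opE ψ v, Algebra.subset_adjoin ⟨v, rfl⟩⟩

theorem oT_mul (hgrp : ∀ s t : Fin d → ℝ, ∀ a : A, ψ s (ψ t a) = ψ (s + t) a) (u v : Fin d → ℝ) : oT ψ u * oT ψ v = oT ψ (u + v) :=
  Subtype.ext (opE_mul ψ hgrp u v)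

theorem oT_zero (hgrp : ∀ s t : Fin d → ℝ, ∀ a : A, ψ s (ψ t a) = ψ (s + t) a) : oT ψ 0 = 1 := Subtype.ext (opE_zero ψ hgrp)

theorem oT_pow (hgrp : ∀ s t : Fin d → ℝ, ∀ a : A, ψ s (ψ t a) = ψ (s + t) a) (v : Fin d → ℝ) (n : ℕ) : oT ψ v ^ n = oT ψ ((n : ℝ) • v) := by
  induction n with
  | zero => simpa using (oT_zero ψ hgrp).symm
  | succ n ih =>
    rw [pow_succ, ih, oT_mul ψ hgrp]
    congr 1
    push_cast
    rw [add_smul, one_smul]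

variable {k : ℕ}

/-- evaluation of polynomials: `X j ↦ ψ_{u j} - 1`, valued in `TA ψ`. -/
noncomputable def PhiT (hgrp : ∀ s t : Fin d → ℝ, ∀ a : A, ψ s (ψ t a) = ψ (s + t) a) (u : Fin k → (Fin d → ℝ)) :
    MvPolynomial (Fin k) ℂ →ₐ[ℂ] TA ψ :=
  letI := TAcomm ψ hgrp
  MvPolynomial.aeval (fun j => oT ψ (u j) - 1)

theorem PhiT_X (hgrp : ∀ s t : Fin d → ℝ, ∀ a : A, ψ s (ψ t a) = ψ (s + t) a) (u : Fin k → (Fin d → ℝ)) (j : Fin k) :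
    PhiT ψ hgrp u (X j) = oT ψ (u j) - 1 := by
  letI := TAcomm ψ hgrp
  simp [PhiT]

theorem PhiT_xp (hgrp : ∀ s t : Fin d → ℝ, ∀ a : A, ψ s (ψ t a) = ψ (s + t) a) (u : Fin k → (Fin d → ℝ)) (γ : Fin k → ℕ) :
    PhiT ψ hgrp u (xp γ) = oT ψ (∑ j, (γ j : ℝ) • u j) := by
  letI := TAcomm ψ hgrp
  rw [xp, map_prod]
  have h1 : ∀ j, PhiT ψ hgrp u ((X j + 1) ^ γ j) = oT ψ ((γ j : ℝ) • u j) := by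
    intro j
    rw [map_pow, map_add, map_one, PhiT_X, sub_add_cancel, oT_pow ψ hgrp]
  rw [Finset.prod_congr rfl (fun j _ => h1 j)]
  -- now a product of `oT`'s
  induction (Finset.univ : Finset (Fin k)) using Finset.induction_on with
  | empty => simpa using (oT_zero ψ hgrp).symm
  | insert _ _ hns ih =>
    rename_i b s
    rw [Finset.prod_insert hns, Finset.sum_insert hns, ih, oT_mul ψ hgrp]

theorem PhiT_gen (hgrp : ∀ s t : Fin d → ℝ, ∀ a : A, ψ s (ψ t a) = ψ (s + t) a) (u : Fin k → (Fin d → ℝ)) (γ : Fin k → ℕ) :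
    PhiT ψ hgrp u ((xp γ - 1) ^ k) = (oT ψ (∑ j, (γ j : ℝ) • u j) - 1) ^ k := by
  rw [map_pow, map_sub, map_one, PhiT_xp]

theorem PhiT_prod (hgrp : ∀ s t : Fin d → ℝ, ∀ a : A, ψ s (ψ t a) = ψ (s + t) a) (u : Fin k → (Fin d → ℝ)) (n : ℕ) :
    PhiT ψ hgrp u (∏ j, ((X j + 1) ^ n - 1))
      = (List.ofFn fun j => oT ψ ((n : ℝ) • u j) - 1).prod := by
  letI := TAcomm ψ hgrp
  rw [map_prod, List.prod_ofFn]
  apply Finset.prod_congr rfl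
  intro j _
  rw [map_sub, map_one, map_pow, map_add, map_one, PhiT_X, sub_add_cancel, oT_pow ψ hgrp]

theorem oT_coe_diff (v : Fin d → ℝ) :
    ((oT ψ v - 1 : TA ψ) : Module.End ℂ A) = diffOp ψ v := rfl

theorem diff_bound (M' : ℝ) (hM' : ∀ (t : Fin d → ℝ) (z : A), ‖ψ t z‖ ≤ M' * ‖z‖)
    (v : Fin d → ℝ) (z : A) : ‖diffOp ψ v z‖ ≤ (M' + 1) * ‖z‖ := by
  have h1 : diffOp ψ v z = ψ v z - z := rfl
  rw [h1]
  calc ‖ψ v z - z‖ ≤ ‖ψ v z‖ + ‖z‖ := norm_sub_le _ _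
  _ ≤ M' * ‖z‖ + ‖z‖ := by have := hM' v z; linarith
  _ = (M' + 1) * ‖z‖ := by ring

theorem pow_bound {A' : Type*} [NormedRing A'] [NormedAlgebra ℂ A'] (T : Module.End ℂ A')
    (κ : ℝ) (hκ0 : 0 ≤ κ) (hκ : ∀ z, ‖T z‖ ≤ κ * ‖z‖) (n : ℕ) (z : A') :
    ‖(T ^ n) z‖ ≤ κ ^ n * ‖z‖ := by
  induction n generalizing z with
  | zero => simp [Module.End.one_apply]
  | succ n ih =>
    rw [pow_succ, Module.End.mul_apply]
    calc ‖(T ^ n) (T z)‖ ≤ κ ^ n * ‖T z‖ := ih (T z)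
    _ ≤ κ ^ n * (κ * ‖z‖) := by
          apply mul_le_mul_of_nonneg_left (hκ z) (pow_nonneg hκ0 n)
    _ = κ ^ (n+1) * ‖z‖ := by ring

theorem list_bound {A' : Type*} [NormedRing A'] [NormedAlgebra ℂ A']
    (κ : ℝ) (hκ0 : 0 ≤ κ) :
    ∀ (l : List (Module.End ℂ A')), (∀ T ∈ l, ∀ z, ‖T z‖ ≤ κ * ‖z‖) → ∀ (z : A'),
    ‖l.prod z‖ ≤ κ ^ l.length * ‖z‖ := by
  intro l
  induction l with
  | nil => intro _ z; simp [Module.End.one_apply]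
  | cons T l ih =>
    intro hl z
    rw [List.prod_cons, Module.End.mul_apply]
    calc ‖T (l.prod z)‖ ≤ κ * ‖l.prod z‖ := hl T List.mem_cons_self _
    _ ≤ κ * (κ ^ l.length * ‖z‖) := by
        apply mul_le_mul_of_nonneg_left _ hκ0
        exact ih (fun S hS => hl S (List.mem_cons_of_mem T hS)) z
    _ = κ ^ (T :: l).length * ‖z‖ := by
        rw [List.length_cons, pow_succ]
        ring

theorem PhiT_norm (hgrp : ∀ s t : Fin d → ℝ, ∀ a : A, ψ s (ψ t a) = ψ (s + t) a)
    (M' : ℝ) (hM' : ∀ (t : Fin d → ℝ) (z : A), ‖ψ t z‖ ≤ M' * ‖z‖) (hM0 : 0 ≤ M')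
    (p : MvPolynomial (Fin k) ℂ) :
    ∃ C : ℝ, 0 ≤ C ∧ ∀ (u : Fin k → (Fin d → ℝ)) (z : A),
      ‖((PhiT ψ hgrp u p : TA ψ) : Module.End ℂ A) z‖ ≤ C * ‖z‖ := by
  induction p using MvPolynomial.induction_on with
  | C q =>
    refine ⟨‖q‖, norm_nonneg q, ?_⟩
    intro u z
    have h1 : PhiT ψ hgrp u (MvPolynomial.C q) = algebraMap ℂ (TA ψ) q := by
      letI := TAcomm ψ hgrp
      simp [PhiT]
    rw [h1]
    have h2 : ((algebraMap ℂ (TA ψ) q : TA ψ) : Module.End ℂ A) z = q • z := by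
      rfl
    rw [h2, norm_smul]
  | add p q hp hq =>
    obtain ⟨Cp, hCp0, hCp⟩ := hp
    obtain ⟨Cq, hCq0, hCq⟩ := hq
    refine ⟨Cp + Cq, by linarith, ?_⟩
    intro u z
    rw [map_add]
    have h1 : (((PhiT ψ hgrp u p + PhiT ψ hgrp u q : TA ψ)) : Module.End ℂ A) z
        = ((PhiT ψ hgrp u p : TA ψ) : Module.End ℂ A) z
          + ((PhiT ψ hgrp u q : TA ψ) : Module.End ℂ A) z := rfl
    rw [h1]
    calc _ ≤ ‖((PhiT ψ hgrp u p : TA ψ) : Module.End ℂ A) z‖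
        + ‖((PhiT ψ hgrp u q : TA ψ) : Module.End ℂ A) z‖ := norm_add_le _ _
    _ ≤ Cp * ‖z‖ + Cq * ‖z‖ := add_le_add (hCp u z) (hCq u z)
    _ = (Cp + Cq) * ‖z‖ := by ring
  | mul_X p j hp =>
    obtain ⟨Cp, hCp0, hCp⟩ := hp
    refine ⟨Cp * (M' + 1), by positivity, ?_⟩
    intro u z
    rw [map_mul]
    have h1 : (((PhiT ψ hgrp u p * PhiT ψ hgrp u (X j) : TA ψ)) : Module.End ℂ A) z
        = ((PhiT ψ hgrp u p : TA ψ) : Module.End ℂ A)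
            (((PhiT ψ hgrp u (X j) : TA ψ) : Module.End ℂ A) z) := rfl
    rw [h1, PhiT_X, oT_coe_diff]
    calc _ ≤ Cp * ‖diffOp ψ (u j) z‖ := hCp u _
    _ ≤ Cp * ((M' + 1) * ‖z‖) :=
        mul_le_mul_of_nonneg_left (diff_bound ψ M' hM' (u j) z) hCp0
    _ = Cp * (M' + 1) * ‖z‖ := by ring

theorem coe_list_prod (l : List (TA ψ)) :
    ((l.prod : TA ψ) : Module.End ℂ A) = (l.map (fun x : TA ψ => (x : Module.End ℂ A))).prod := by
  induction l with
  | nil => simp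
  | cons x l ih =>
    rw [List.prod_cons, List.map_cons, List.prod_cons, MulMemClass.coe_mul, ih]

end Transport

end Stmt11Aux

open Stmt11Aux in
theorem stmt_11' {A : Type*} [NormedRing A] [NormedAlgebra ℂ A] [CompleteSpace A]
    {d : ℕ} (ψ : (Fin d → ℝ) → (A ≃ₐ[ℂ] A))
    (hgrp : ∀ s t : Fin d → ℝ, ∀ a : A, ψ s (ψ t a) = ψ (s + t) a)
    (M : ℝ) (hM : ∀ (t : Fin d → ℝ) (a : A), ‖ψ t a‖ ≤ M * ‖a‖)
    (k : ℕ) :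
    ∃ c₁ c₂ : ℝ, 0 < c₁ ∧ 0 < c₂ ∧ ∀ (a : A) (h : ℝ), 0 < h →
      (c₁ * sSup {x : ℝ | ∃ t : Fin d → ℝ, ‖t‖ ≤ h ∧ x = ‖(diffOp ψ t ^ k) a‖} ≤
          sSup {x : ℝ | ∃ ts : Fin k → (Fin d → ℝ), (∀ j, ‖ts j‖ ≤ h) ∧
            x = ‖(List.ofFn fun j => diffOp ψ (ts j)).prod a‖}) ∧
        sSup {x : ℝ | ∃ ts : Fin k → (Fin d → ℝ), (∀ j, ‖ts j‖ ≤ h) ∧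
            x = ‖(List.ofFn fun j => diffOp ψ (ts j)).prod a‖} ≤
          c₂ * sSup {x : ℝ | ∃ t : Fin d → ℝ, ‖t‖ ≤ h ∧ x = ‖(diffOp ψ t ^ k) a‖} := by
  classical
  set M' := max M 0 with hM'def
  have hM' : ∀ (t : Fin d → ℝ) (z : A), ‖ψ t z‖ ≤ M' * ‖z‖ := fun t z =>
    le_trans (hM t z) (mul_le_mul_of_nonneg_right (le_max_left M 0) (norm_nonneg z))
  have hM'0 : 0 ≤ M' := le_max_right M 0
  have hκ0 : (0:ℝ) ≤ M' + 1 := by linarith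
  rcases Nat.eq_zero_or_pos k with rfl | hk
  · -- trivial case k = 0
    refine ⟨1, 1, one_pos, one_pos, ?_⟩
    intro a h hpos
    have hset1 : {x : ℝ | ∃ t : Fin d → ℝ, ‖t‖ ≤ h ∧ x = ‖(diffOp ψ t ^ 0) a‖} = {‖a‖} := by
      ext x
      simp only [pow_zero, Set.mem_setOf_eq, Set.mem_singleton_iff]
      constructor
      · rintro ⟨t, _, rfl⟩
        rw [Module.End.one_apply]
      · rintro rfl
        exact ⟨0, by simpa using hpos.le, by rw [Module.End.one_apply]⟩
    have hset2 : {x : ℝ | ∃ ts : Fin 0 → (Fin d → ℝ), (∀ j, ‖ts j‖ ≤ h) ∧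
        x = ‖(List.ofFn fun j => diffOp ψ (ts j)).prod a‖} = {‖a‖} := by
      ext x
      simp only [Set.mem_setOf_eq, Set.mem_singleton_iff]
      constructor
      · rintro ⟨ts, _, rfl⟩
        rw [List.ofFn_zero, List.prod_nil, Module.End.one_apply]
      · rintro rfl
        exact ⟨fun j => j.elim0, fun j => j.elim0,
          by rw [List.ofFn_zero, List.prod_nil, Module.End.one_apply]⟩
    rw [hset1, hset2, csSup_singleton]
    exact ⟨by simp, by simp⟩
  · -- main case k ≥ 1
    set N := NN k with hNdef
    have hNval : N = k * (k-1) + 1 := rfl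
    have hNpos : 0 < N := by omega
    have hNne : (N:ℝ) ≠ 0 := Nat.cast_ne_zero.mpr (by omega)
    obtain ⟨σc, hsupp, hrepr⟩ := Submodule.mem_span_set.mp (prod_X_mem hk)
    have hγ' : ∀ g : MvPolynomial (Fin k) ℂ, ∃ γ : Fin k → ℕ,
        g ∈ σc.support → ((∑ j, γ j) ≤ N ∧ g = (xp γ - 1)^k) := by
      intro g
      by_cases hg : g ∈ σc.support
      · obtain ⟨γ, h1, h2⟩ := hsupp hg
        exact ⟨γ, fun _ => ⟨h1, h2⟩⟩
      · exact ⟨0, fun hgg => absurd hgg hg⟩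
    choose γf hγf using hγ'
    set Q₀ : MvPolynomial (Fin k) ℂ := ∏ j, ∑ i ∈ Finset.range N, (MvPolynomial.X j + 1)^i
      with hQ₀
    have hCex : ∀ g : MvPolynomial (Fin k) ℂ, ∃ C : ℝ, 0 ≤ C ∧
        ∀ (u : Fin k → (Fin d → ℝ)) (z : A),
        ‖((PhiT ψ hgrp u (Q₀ * g) : TA ψ) : Module.End ℂ A) z‖ ≤ C * ‖z‖ :=
      fun g => PhiT_norm ψ hgrp M' hM' hM'0 (Q₀ * g)
    choose Cf hCf0 hCfb using hCex
    have hc₂pos : (0:ℝ) < (∑ g ∈ σc.support, Cf (σc g)) + 1 := by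
      have : (0:ℝ) ≤ ∑ g ∈ σc.support, Cf (σc g) :=
        Finset.sum_nonneg (fun g _ => hCf0 (σc g))
      linarith
    refine ⟨1, (∑ g ∈ σc.support, Cf (σc g)) + 1, one_pos, hc₂pos, ?_⟩
    intro a h hpos
    have hdb : ∀ t : Fin d → ℝ, ∀ z : A, ‖diffOp ψ t z‖ ≤ (M'+1) * ‖z‖ :=
      fun t z => diff_bound ψ M' hM' t z
    have hmem0 : ‖(diffOp ψ (0 : Fin d → ℝ) ^ k) a‖
        ∈ {x : ℝ | ∃ t : Fin d → ℝ, ‖t‖ ≤ h ∧ x = ‖(diffOp ψ t ^ k) a‖} :=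
      ⟨0, by simpa using hpos.le, rfl⟩
    have hbddpow : BddAbove {x : ℝ | ∃ t : Fin d → ℝ, ‖t‖ ≤ h ∧ x = ‖(diffOp ψ t ^ k) a‖} := by
      refine ⟨(M'+1)^k * ‖a‖, ?_⟩
      rintro x ⟨t, ht, rfl⟩
      exact pow_bound (diffOp ψ t) (M'+1) hκ0 (hdb t) k a
    have hWnn : 0 ≤ sSup {x : ℝ | ∃ t : Fin d → ℝ, ‖t‖ ≤ h ∧ x = ‖(diffOp ψ t ^ k) a‖} :=
      le_trans (norm_nonneg _) (le_csSup hbddpow hmem0)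
    have hWle : ∀ v : Fin d → ℝ, ‖v‖ ≤ h → ‖(diffOp ψ v ^ k) a‖
        ≤ sSup {x : ℝ | ∃ t : Fin d → ℝ, ‖t‖ ≤ h ∧ x = ‖(diffOp ψ t ^ k) a‖} :=
      fun v hv => le_csSup hbddpow ⟨v, hv, rfl⟩
    have hbddmix : BddAbove {x : ℝ | ∃ ts : Fin k → (Fin d → ℝ), (∀ j, ‖ts j‖ ≤ h) ∧
        x = ‖(List.ofFn fun j => diffOp ψ (ts j)).prod a‖} := by
      refine ⟨(M'+1)^k * ‖a‖, ?_⟩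
      rintro x ⟨ts, hts, rfl⟩
      have hl : ∀ T ∈ (List.ofFn fun j => diffOp ψ (ts j)), ∀ z : A, ‖T z‖ ≤ (M'+1) * ‖z‖ := by
        intro T hT z
        obtain ⟨j, rfl⟩ := List.mem_ofFn.mp hT
        exact hdb (ts j) z
      have := list_bound (M'+1) hκ0 (List.ofFn fun j => diffOp ψ (ts j)) hl a
      simpa [List.length_ofFn] using this
    constructor
    · -- easy direction
      rw [one_mul]
      apply csSup_le_csSup hbddmix ⟨_, hmem0⟩
      rintro x ⟨t, ht, rfl⟩
      refine ⟨fun _ => t, fun _ => ht, ?_⟩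
      rw [List.ofFn_const, List.prod_replicate]
    · -- hard direction
      apply Real.sSup_le
      · rintro x ⟨ts, hts, rfl⟩
        set u : Fin k → (Fin d → ℝ) := fun j => (N:ℝ)⁻¹ • ts j with hu
        have hts_eq : ∀ j, (N:ℝ) • u j = ts j := by
          intro j
          rw [hu]
          simp only []
          rw [smul_smul, mul_inv_cancel₀ hNne, one_smul]
        -- Step A : identify the mixed product with the image of a polynomial
        have hA : (List.ofFn fun j => diffOp ψ (ts j)).prod
            = ((PhiT ψ hgrp u (∏ j, ((MvPolynomial.X j + 1)^N - 1)) : TA ψ)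
                : Module.End ℂ A) := by
          rw [PhiT_prod ψ hgrp u N]
          have h2 : (List.ofFn fun j => oT ψ ((N:ℝ) • u j) - 1)
              = (List.ofFn fun j => oT ψ (ts j) - 1) :=
            congrArg List.ofFn (funext fun j => by rw [hts_eq j])
          rw [h2, Stmt11Aux.coe_list_prod, List.map_ofFn]
          congr 1
        -- Step B : factor the polynomial
        have hB : (∏ j, ((MvPolynomial.X j + 1)^N - 1) : MvPolynomial (Fin k) ℂ)
            = Q₀ * ∏ j, MvPolynomial.X j := by
          rw [hQ₀, ← Finset.prod_mul_distrib]
          apply Finset.prod_congr rfl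
          intro j _
          have hg := geom_sum_mul (MvPolynomial.X j + 1 : MvPolynomial (Fin k) ℂ) N
          rw [add_sub_cancel_right] at hg
          exact hg.symm
        -- Step C : representation from the ideal membership
        have hC : (Q₀ * ∏ j, MvPolynomial.X j : MvPolynomial (Fin k) ℂ)
            = ∑ g ∈ σc.support, (Q₀ * σc g) * g := by
          rw [← hrepr, Finsupp.sum, Finset.mul_sum]
          apply Finset.sum_congr rfl
          intro g hg
          rw [smul_eq_mul]
          ring
        rw [hA, hB, hC, map_sum]
        have hcoe : ((( ∑ g ∈ σc.support, PhiT ψ hgrp u ((Q₀ * σc g) * g) : TA ψ))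
            : Module.End ℂ A) a
            = ∑ g ∈ σc.support,
                ((PhiT ψ hgrp u (Q₀ * σc g) : TA ψ) : Module.End ℂ A)
                  (((PhiT ψ hgrp u g : TA ψ) : Module.End ℂ A) a) := by
          rw [AddSubmonoidClass.coe_finset_sum, LinearMap.sum_apply]
          apply Finset.sum_congr rfl
          intro g hg
          rw [map_mul, MulMemClass.coe_mul, Module.End.mul_apply]
        rw [hcoe]
        calc ‖∑ g ∈ σc.support,
              ((PhiT ψ hgrp u (Q₀ * σc g) : TA ψ) : Module.End ℂ A)
                (((PhiT ψ hgrp u g : TA ψ) : Module.End ℂ A) a)‖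
            ≤ ∑ g ∈ σc.support, ‖((PhiT ψ hgrp u (Q₀ * σc g) : TA ψ) : Module.End ℂ A)
                (((PhiT ψ hgrp u g : TA ψ) : Module.End ℂ A) a)‖ := norm_sum_le _ _
        _ ≤ ∑ g ∈ σc.support, Cf (σc g)
              * sSup {x : ℝ | ∃ t : Fin d → ℝ, ‖t‖ ≤ h ∧ x = ‖(diffOp ψ t ^ k) a‖} := by
            apply Finset.sum_le_sum
            intro g hg
            obtain ⟨hγsum, hγeq⟩ := hγf g hg
            have hv : ‖∑ j, ((γf g j : ℝ) • u j)‖ ≤ h := by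
              calc ‖∑ j, ((γf g j : ℝ) • u j)‖ ≤ ∑ j, ‖(γf g j : ℝ) • u j‖ :=
                    norm_sum_le _ _
              _ ≤ ∑ j, (γf g j : ℝ) * ((N:ℝ)⁻¹ * h) := by
                  apply Finset.sum_le_sum
                  intro j _
                  rw [hu]
                  simp only []
                  rw [smul_smul, norm_smul]
                  have h1 : ‖(γf g j : ℝ) * (N:ℝ)⁻¹‖ = (γf g j : ℝ) * (N:ℝ)⁻¹ := by
                    rw [Real.norm_eq_abs, abs_of_nonneg]
                    positivity
                  rw [h1, mul_assoc]
                  apply mul_le_mul_of_nonneg_left _ (by positivity)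
                  apply mul_le_mul_of_nonneg_left (hts j) (by positivity)
              _ = (∑ j, (γf g j : ℝ)) * ((N:ℝ)⁻¹ * h) := by rw [Finset.sum_mul]
              _ ≤ (N:ℝ) * ((N:ℝ)⁻¹ * h) := by
                  apply mul_le_mul_of_nonneg_right _ (by positivity)
                  rw [← Nat.cast_sum]
                  exact_mod_cast hγsum
              _ = h := by
                  rw [← mul_assoc, mul_inv_cancel₀ hNne, one_mul]
            have himg : ((PhiT ψ hgrp u g : TA ψ) : Module.End ℂ A) a
                = ((diffOp ψ (∑ j, ((γf g j : ℝ) • u j)) ^ k)) a := by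
              conv_lhs => rw [hγeq]
              rw [PhiT_gen ψ hgrp u (γf g)]
              rw [SubmonoidClass.coe_pow, oT_coe_diff]
            calc ‖((PhiT ψ hgrp u (Q₀ * σc g) : TA ψ) : Module.End ℂ A)
                  (((PhiT ψ hgrp u g : TA ψ) : Module.End ℂ A) a)‖
                ≤ Cf (σc g) * ‖((PhiT ψ hgrp u g : TA ψ) : Module.End ℂ A) a‖ :=
                  hCfb (σc g) u _
            _ ≤ Cf (σc g) * sSup {x : ℝ | ∃ t : Fin d → ℝ, ‖t‖ ≤ h ∧ x = ‖(diffOp ψ t ^ k) a‖} := by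
                  apply mul_le_mul_of_nonneg_left _ (hCf0 (σc g))
                  rw [himg]
                  exact hWle _ hv
        _ ≤ ((∑ g ∈ σc.support, Cf (σc g)) + 1)
              * sSup {x : ℝ | ∃ t : Fin d → ℝ, ‖t‖ ≤ h ∧ x = ‖(diffOp ψ t ^ k) a‖} := by
            rw [← Finset.sum_mul]
            apply mul_le_mul_of_nonneg_right _ hWnn
            linarith
      · positivity


/-- The modulus of smoothness `ω^k_h(a) = sup_{|t| ≤ h} ‖Δ_t^k a‖` is equivalent,
with constants depending only on `k` and `M`, to
`sup {‖Δ_{h₁}⋯Δ_{h_k} a‖ : |h_j| ≤ h}`. -/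
theorem stmt_11 {A : Type*} [NormedRing A] [NormedAlgebra ℂ A] [CompleteSpace A]
    {d : ℕ} (ψ : (Fin d → ℝ) → (A ≃ₐ[ℂ] A))
    (hgrp : ∀ s t : Fin d → ℝ, ∀ a : A, ψ s (ψ t a) = ψ (s + t) a)
    (M : ℝ) (hM : ∀ (t : Fin d → ℝ) (a : A), ‖ψ t a‖ ≤ M * ‖a‖)
    (k : ℕ) :
    ∃ c₁ c₂ : ℝ, 0 < c₁ ∧ 0 < c₂ ∧ ∀ (a : A) (h : ℝ), 0 < h →
      (c₁ * sSup {x : ℝ | ∃ t : Fin d → ℝ, ‖t‖ ≤ h ∧ x = ‖(diffOp ψ t ^ k) a‖} ≤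
          sSup {x : ℝ | ∃ ts : Fin k → (Fin d → ℝ), (∀ j, ‖ts j‖ ≤ h) ∧
            x = ‖(List.ofFn fun j => diffOp ψ (ts j)).prod a‖}) ∧
        sSup {x : ℝ | ∃ ts : Fin k → (Fin d → ℝ), (∀ j, ‖ts j‖ ≤ h) ∧
            x = ‖(List.ofFn fun j => diffOp ψ (ts j)).prod a‖} ≤
          c₂ * sSup {x : ℝ | ∃ t : Fin d → ℝ, ‖t‖ ≤ h ∧ x = ‖(diffOp ψ t ^ k) a‖} :=
  stmt_11' ψ hgrp M hM k
end
end

section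
/- For the Schur algebra S^∞_r (r ≥ 0) of matrices A over ℤ^d with ‖A‖ = sup_{k,l} |A(k,l)|(1+|k−l|)^r < ∞: if A, B ∈ S^∞_r and r > d, then AB ∈ S^∞_r with ‖AB‖ ≤ C_r ‖A‖‖B‖ for a constant C_r depending only on r and d. -/
open Real Finset

private lemma aux_summable_int {s : ℝ} (hs : 1 < s) :
    Summable (fun n : ℤ => (1 + |(n : ℝ)|) ^ (-s)) := by
  have h0 : Summable (fun n : ℤ => if n = (0 : ℤ) then (1 : ℝ) else 0) :=
    (hasSum_ite_eq (0 : ℤ) (1 : ℝ)).summable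
  refine Summable.of_nonneg_of_le (fun n => Real.rpow_nonneg (by positivity) _) ?_
    ((summable_abs_int_rpow hs).add h0)
  intro n
  by_cases hn : n = 0
  · subst hn
    simp [Real.zero_rpow (by linarith : -s ≠ 0)]
  · have h1 : (0 : ℝ) < |(n : ℝ)| := by
      simpa using (by exact_mod_cast hn : ((n : ℝ)) ≠ 0)
    have h2 : (1 + |(n : ℝ)|) ^ (-s) ≤ |(n : ℝ)| ^ (-s) :=
      Real.rpow_le_rpow_of_nonpos h1 (by linarith) (by linarith)
    simp only [hn, if_false, add_zero]
    exact h2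

private lemma aux_summable_pi (d : ℕ) {s : ℝ} (hs : 1 < s) :
    Summable (fun x : Fin d → ℤ => ∏ j, (1 + |((x j : ℤ) : ℝ)|) ^ (-s)) := by
  induction d with
  | zero => exact Summable.of_finite
  | succ n ih =>
      have h := (aux_summable_int hs).mul_of_nonneg ih
        (fun m => Real.rpow_nonneg (by positivity) _)
        (fun x => Finset.prod_nonneg fun j _ => Real.rpow_nonneg (by positivity) _)
      have h2 := (Fin.consEquiv (fun _ : Fin (n + 1) => ℤ)).symm.summable_iff.mpr h
      refine h2.congr fun x => ?_
      simp only [Function.comp_apply, Fin.consEquiv, Equiv.coe_fn_symm_mk]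
      rw [Fin.prod_univ_succ]
      rfl

private lemma aux_summable_w {d : ℕ} {r : ℝ} (hr : (d : ℝ) < r) :
    Summable (fun x : Fin d → ℤ => (1 + ∑ j, |((x j : ℤ) : ℝ)|) ^ (-r)) := by
  rcases Nat.eq_zero_or_pos d with hd | hd
  · subst hd; exact Summable.of_finite
  · have hd' : (0 : ℝ) < d := by exact_mod_cast hd
    set s := r / d with hs_def
    have hs : 1 < s := (one_lt_div hd').mpr hr
    refine (aux_summable_pi d hs).of_nonneg_of_le
      (fun x => Real.rpow_nonneg (by positivity) _) ?_
    intro x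
    have h1 : (0 : ℝ) < 1 + ∑ j, |((x j : ℤ) : ℝ)| := by positivity
    have hfac : ∀ j : Fin d, (0:ℝ) < 1 + |((x j : ℤ) : ℝ)| := fun j => by positivity
    have hprod : ∏ j, (1 + |((x j : ℤ) : ℝ)|) ≤ (1 + ∑ j, |((x j : ℤ) : ℝ)|) ^ (d : ℕ) := by
      have h := Finset.prod_le_prod (s := Finset.univ)
        (f := fun j : Fin d => 1 + |((x j : ℤ) : ℝ)|)
        (g := fun _ : Fin d => 1 + ∑ i, |((x i : ℤ) : ℝ)|)
        (fun j _ => (hfac j).le)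
        (fun j _ => by
          have : |((x j : ℤ) : ℝ)| ≤ ∑ i, |((x i : ℤ) : ℝ)| :=
            Finset.single_le_sum (f := fun i : Fin d => |((x i : ℤ) : ℝ)|)
              (fun i _ => abs_nonneg _) (Finset.mem_univ j)
          linarith)
      simpa using h
    have h2 : (∏ j, (1 + |((x j : ℤ) : ℝ)|)) ^ s ≤ (1 + ∑ j, |((x j : ℤ) : ℝ)|) ^ r := by
      have := Real.rpow_le_rpow (Finset.prod_nonneg fun j _ => (hfac j).le) hprod
        (by positivity : (0:ℝ) ≤ s)
      rwa [← Real.rpow_natCast (1 + ∑ j, |((x j : ℤ) : ℝ)|) d, ← Real.rpow_mul h1.le,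
        show (d : ℝ) * s = r by rw [hs_def]; field_simp] at this
    have hprodpos : (0:ℝ) < ∏ j, (1 + |((x j : ℤ) : ℝ)|) :=
      Finset.prod_pos fun j _ => hfac j
    calc (1 + ∑ j, |((x j : ℤ) : ℝ)|) ^ (-r)
        = ((1 + ∑ j, |((x j : ℤ) : ℝ)|) ^ r)⁻¹ := by rw [Real.rpow_neg h1.le]
      _ ≤ ((∏ j, (1 + |((x j : ℤ) : ℝ)|)) ^ s)⁻¹ :=
          inv_anti₀ (Real.rpow_pos_of_pos hprodpos s) h2
      _ = (∏ j, (1 + |((x j : ℤ) : ℝ)|) ^ s)⁻¹ := by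
          rw [Real.finset_prod_rpow _ _ (fun j _ => (hfac j).le)]
      _ = ∏ j, (1 + |((x j : ℤ) : ℝ)|) ^ (-s) := by
          rw [← Finset.prod_inv_distrib]
          exact Finset.prod_congr rfl fun j _ => (Real.rpow_neg (hfac j).le s).symm

/-- Jaffard/Schur algebra `S^∞_r`: for `r > d` there is a constant `C = C_{r,d} > 0`
such that whenever `|A(k,l)|(1+|k-l|)^r ≤ Ka` and `|B(k,l)|(1+|k-l|)^r ≤ Kb` for all
`k, l ∈ ℤ^d`, the product satisfies `|(AB)(k,l)|(1+|k-l|)^r ≤ C·Ka·Kb`. -/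
theorem stmt_16 {d : ℕ} (r : ℝ) (hr : (d : ℝ) < r) :
    ∃ C : ℝ, 0 < C ∧
      ∀ (A B : (Fin d → ℤ) → (Fin d → ℤ) → ℂ) (Ka Kb : ℝ),
        (∀ k l, ‖A k l‖ * (1 + ∑ j, |((k j - l j : ℤ) : ℝ)|) ^ r ≤ Ka) →
        (∀ k l, ‖B k l‖ * (1 + ∑ j, |((k j - l j : ℤ) : ℝ)|) ^ r ≤ Kb) →
        ∀ k l, ‖∑' m : Fin d → ℤ, A k m * B m l‖ *
            (1 + ∑ j, |((k j - l j : ℤ) : ℝ)|) ^ r ≤ C * Ka * Kb := by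
  classical
  have hr0 : (0 : ℝ) ≤ r := le_of_lt (lt_of_le_of_lt (Nat.cast_nonneg d) hr)
  set w : (Fin d → ℤ) → ℝ := fun x => (1 + ∑ j, |((x j : ℤ) : ℝ)|) ^ (-r) with hw
  have hwsum : Summable w := aux_summable_w hr
  set S : ℝ := ∑' x, w x with hS
  have hSpos : 0 < S := by
    refine Summable.tsum_pos hwsum (fun x => Real.rpow_nonneg (by positivity) _) 0 ?_
    simp [hw]
  refine ⟨2 ^ r * (S + S), by positivity, ?_⟩
  intro A B Ka Kb hA hB k l
  set a : (Fin d → ℤ) → ℝ := fun m => 1 + ∑ j, |((k j - m j : ℤ) : ℝ)| with ha_def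
  set b : (Fin d → ℤ) → ℝ := fun m => 1 + ∑ j, |((m j - l j : ℤ) : ℝ)| with hb_def
  set t : ℝ := 1 + ∑ j, |((k j - l j : ℤ) : ℝ)| with ht_def
  have ha : ∀ m, (0 : ℝ) < a m := fun m => by simp only [ha_def]; positivity
  have hb : ∀ m, (0 : ℝ) < b m := fun m => by simp only [hb_def]; positivity
  have ht : (0 : ℝ) < t := by rw [ht_def]; positivity
  have hKa : 0 ≤ Ka := by
    have h := hA k k
    simp only [sub_self, Int.cast_zero, abs_zero, Finset.sum_const_zero, add_zero,
      Real.one_rpow, mul_one] at h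
    exact le_trans (norm_nonneg _) h
  have hKb : 0 ≤ Kb := by
    have h := hB k k
    simp only [sub_self, Int.cast_zero, abs_zero, Finset.sum_const_zero, add_zero,
      Real.one_rpow, mul_one] at h
    exact le_trans (norm_nonneg _) h
  have hA' : ∀ m, ‖A k m‖ ≤ Ka * a m ^ (-r) := by
    intro m
    rw [Real.rpow_neg (ha m).le, ← div_eq_mul_inv,
      le_div_iff₀ (Real.rpow_pos_of_pos (ha m) r)]
    exact hA k m
  have hB' : ∀ m, ‖B m l‖ ≤ Kb * b m ^ (-r) := by
    intro m
    rw [Real.rpow_neg (hb m).le, ← div_eq_mul_inv,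
      le_div_iff₀ (Real.rpow_pos_of_pos (hb m) r)]
    exact hB m l
  -- summability of m ↦ a m ^ (-r) and m ↦ b m ^ (-r), and their sums
  set e₁ : (Fin d → ℤ) ≃ (Fin d → ℤ) := Equiv.piCongrRight (fun j => Equiv.subLeft (k j))
    with he₁def
  set e₂ : (Fin d → ℤ) ≃ (Fin d → ℤ) := Equiv.piCongrRight (fun j => Equiv.subRight (l j))
    with he₂def
  have he₁ : ∀ m, w (e₁ m) = a m ^ (-r) := by
    intro m
    simp [hw, ha_def, he₁def, Equiv.subLeft, Equiv.piCongrRight, Int.cast_sub]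
  have he₂ : ∀ m, w (e₂ m) = b m ^ (-r) := by
    intro m
    simp [hw, hb_def, he₂def, Equiv.subRight, Equiv.piCongrRight, Int.cast_sub]
  have hwa : Summable (fun m => a m ^ (-r)) := by
    refine (e₁.summable_iff.mpr hwsum).congr fun m => ?_
    exact he₁ m
  have hwb : Summable (fun m => b m ^ (-r)) := by
    refine (e₂.summable_iff.mpr hwsum).congr fun m => ?_
    exact he₂ m
  have hSa : ∑' m, a m ^ (-r) = S := by
    rw [hS, ← e₁.tsum_eq w]
    exact tsum_congr fun m => (he₁ m).symm
  have hSb : ∑' m, b m ^ (-r) = S := by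
    rw [hS, ← e₂.tsum_eq w]
    exact tsum_congr fun m => (he₂ m).symm
  -- pointwise key inequality
  have hterm : ∀ m, ‖A k m * B m l‖ * t ^ r ≤
      2 ^ r * Ka * Kb * (a m ^ (-r) + b m ^ (-r)) := by
    intro m
    have h1 : t ≤ a m + b m := by
      have hsum : (∑ j, |((k j - l j : ℤ) : ℝ)|) ≤
          (∑ j, |((k j - m j : ℤ) : ℝ)|) + ∑ j, |((m j - l j : ℤ) : ℝ)| := by
        rw [← Finset.sum_add_distrib]
        refine Finset.sum_le_sum fun j _ => ?_
        push_cast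
        exact abs_sub_le _ _ _
      have h2 : (0 : ℝ) ≤ ∑ j, |((m j - l j : ℤ) : ℝ)| :=
        Finset.sum_nonneg fun j _ => abs_nonneg _
      simp only [ha_def, hb_def, ht_def]
      linarith
    have h2 : t ^ r ≤ 2 ^ r * (a m ^ r + b m ^ r) := by
      have hmax : a m + b m ≤ 2 * max (a m) (b m) := by
        rcases le_total (a m) (b m) with h | h
        · rw [max_eq_right h]; linarith
        · rw [max_eq_left h]; linarith
      have hmaxpos : (0 : ℝ) < max (a m) (b m) := lt_of_lt_of_le (ha m) (le_max_left _ _)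
      calc t ^ r ≤ (a m + b m) ^ r := Real.rpow_le_rpow ht.le h1 hr0
        _ ≤ (2 * max (a m) (b m)) ^ r := Real.rpow_le_rpow (by positivity) hmax hr0
        _ = 2 ^ r * max (a m) (b m) ^ r := Real.mul_rpow (by norm_num) hmaxpos.le
        _ ≤ 2 ^ r * (a m ^ r + b m ^ r) := by
            rcases le_total (a m) (b m) with h | h
            · rw [max_eq_right h]
              have := Real.rpow_nonneg (ha m).le r
              nlinarith [Real.rpow_pos_of_pos (by positivity : (0:ℝ) < (2:ℝ)) r]
            · rw [max_eq_left h]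
              have := Real.rpow_nonneg (hb m).le r
              nlinarith [Real.rpow_pos_of_pos (by positivity : (0:ℝ) < (2:ℝ)) r]
    have haa : a m ^ (-r) * a m ^ r = 1 := by
      rw [← Real.rpow_add (ha m)]; simp
    have hbb : b m ^ (-r) * b m ^ r = 1 := by
      rw [← Real.rpow_add (hb m)]; simp
    calc ‖A k m * B m l‖ * t ^ r = ‖A k m‖ * ‖B m l‖ * t ^ r := by rw [norm_mul]
      _ ≤ (Ka * a m ^ (-r)) * (Kb * b m ^ (-r)) * (2 ^ r * (a m ^ r + b m ^ r)) := by
          refine mul_le_mul ?_ h2 (Real.rpow_nonneg ht.le r) ?_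
          · exact mul_le_mul (hA' m) (hB' m) (norm_nonneg _)
              (mul_nonneg hKa (Real.rpow_nonneg (ha m).le _))
          · exact mul_nonneg (mul_nonneg hKa (Real.rpow_nonneg (ha m).le _))
              (mul_nonneg hKb (Real.rpow_nonneg (hb m).le _))
      _ = 2 ^ r * Ka * Kb * (a m ^ (-r) + b m ^ (-r)) := by
          linear_combination (2 ^ r * Ka * Kb * b m ^ (-r)) * haa +
            (2 ^ r * Ka * Kb * a m ^ (-r)) * hbb
  -- summability of norms
  have hbone : ∀ m, b m ^ (-r) ≤ 1 := fun m =>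
    Real.rpow_le_one_of_one_le_of_nonpos
      (by simp only [hb_def]; have : (0:ℝ) ≤ ∑ j, |((m j - l j : ℤ) : ℝ)| :=
            Finset.sum_nonneg fun j _ => abs_nonneg _
          linarith)
      (neg_nonpos.mpr hr0)
  have hnormsum : Summable (fun m => ‖A k m * B m l‖) := by
    refine Summable.of_nonneg_of_le (fun m => norm_nonneg _) (fun m => ?_)
      (hwa.mul_left (Ka * Kb))
    calc ‖A k m * B m l‖ = ‖A k m‖ * ‖B m l‖ := norm_mul _ _
      _ ≤ (Ka * a m ^ (-r)) * (Kb * b m ^ (-r)) :=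
          mul_le_mul (hA' m) (hB' m) (norm_nonneg _)
            (mul_nonneg hKa (Real.rpow_nonneg (ha m).le _))
      _ ≤ (Ka * a m ^ (-r)) * (Kb * 1) := by
          refine mul_le_mul_of_nonneg_left ?_
            (mul_nonneg hKa (Real.rpow_nonneg (ha m).le _))
          exact mul_le_mul_of_nonneg_left (hbone m) hKb
      _ = Ka * Kb * a m ^ (-r) := by ring
  have hfinal : ‖∑' m : Fin d → ℤ, A k m * B m l‖ * t ^ r ≤
      2 ^ r * Ka * Kb * (S + S) := by
    calc ‖∑' m : Fin d → ℤ, A k m * B m l‖ * t ^ r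
        ≤ (∑' m : Fin d → ℤ, ‖A k m * B m l‖) * t ^ r :=
          mul_le_mul_of_nonneg_right (norm_tsum_le_tsum_norm hnormsum)
            (Real.rpow_nonneg ht.le r)
      _ = ∑' m : Fin d → ℤ, ‖A k m * B m l‖ * t ^ r := tsum_mul_right.symm
      _ ≤ ∑' m : Fin d → ℤ, 2 ^ r * Ka * Kb * (a m ^ (-r) + b m ^ (-r)) :=
          Summable.tsum_le_tsum hterm (hnormsum.mul_right _) ((hwa.add hwb).mul_left _)
      _ = 2 ^ r * Ka * Kb * (S + S) := by
          rw [tsum_mul_left, Summable.tsum_add hwa hwb, hSa, hSb]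
  calc ‖∑' m : Fin d → ℤ, A k m * B m l‖ * t ^ r ≤ 2 ^ r * Ka * Kb * (S + S) := hfinal
    _ = 2 ^ r * (S + S) * Ka * Kb := by ring
end
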